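/- Let G be a connected plane geometric graph (a graph on a finite set of vertices in ℝ², drawn with straight-line edges, no two of which cross) with at least two vertices, and let q be a point lying strictly outside the convex hull of the vertex set of G. Then q sees some edge of G, i.e., there is an edge (a,b) of G such that the open interior of the triangle with vertices q, a, b is disjoint from every vertex and every edge of G. -/

import Mathlib

open scoped Classical
set_option linter.unusedSectionVars false
set_option maxHeartbeats 1000000

noncomputable section

/-- Points in the Euclidean plane. -/
abbrev Pt : Type := EuclideanSpace ℝ (Fin 2)

/-- `S` is in general position: no three (distinct) points of `S` are collinear. -/
def GenPos (S : Finset Pt) : Prop :=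
  ∀ p ∈ S, ∀ q ∈ S, ∀ r ∈ S, p ≠ q → p ≠ r → q ≠ r →
    ¬ Collinear ℝ ({p, q, r} : Set Pt)

/-- The closed segments `[a,b]` and `[c,d]` cross: they share a point that is
interior to both segments. -/
def SegCross (a b c d : Pt) : Prop :=
  ∃ p : Pt, p ∈ openSegment ℝ a b ∧ p ∈ openSegment ℝ c d

/-- Two unordered edges (over vertices lying in the plane) cross. -/
def EdgeCross {S : Finset Pt} (e₁ e₂ : Sym2 ↥S) : Prop :=
  ∃ a b c d : ↥S, e₁ = s(a, b) ∧ e₂ = s(c, d) ∧ SegCross ↑a ↑b ↑c ↑d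

/-- A (straight-line drawn) graph is plane if no two of its edges cross. -/
def PlaneGraph {S : Finset Pt} (G : SimpleGraph ↥S) : Prop :=
  ∀ e₁ ∈ G.edgeSet, ∀ e₂ ∈ G.edgeSet, e₁ ≠ e₂ → ¬ EdgeCross e₁ e₂

/-- Every edge has one red (`true`) and one blue (`false`) endpoint. -/
def Bichromatic {S : Finset Pt} (col : Pt → Bool) (G : SimpleGraph ↥S) : Prop :=
  ∀ u v : ↥S, G.Adj u v → col ↑u ≠ col ↑v

/-- The Euclidean length of an unordered edge. -/
def edgeLen {S : Finset Pt} : Sym2 ↥S → ℝ :=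
  Sym2.lift ⟨fun a b => dist (a : Pt) (b : Pt), fun _ _ => dist_comm _ _⟩

/-- The total Euclidean length of the edges of a graph drawn with straight-line edges. -/
def graphLen {S : Finset Pt} (G : SimpleGraph ↥S) : ℝ :=
  ∑ᶠ e ∈ G.edgeSet, edgeLen e

/-- A bichromatic spanning tree of `S`. -/
def IsBST {S : Finset Pt} (col : Pt → Bool) (G : SimpleGraph ↥S) : Prop :=
  G.IsTree ∧ Bichromatic col G

/-- A minimum bichromatic spanning tree of `S`. -/
def IsMinBST {S : Finset Pt} (col : Pt → Bool) (G : SimpleGraph ↥S) : Prop :=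
  IsBST col G ∧ ∀ G' : SimpleGraph ↥S, IsBST col G' → graphLen G ≤ graphLen G'

structure VS where
  S : Finset Pt
  G : SimpleGraph ↥S
  q : Pt
  n0 : ℝ
  n1 : ℝ
  δ : ℝ
  hδ : 0 < δ
  hplane : PlaneGraph G
  hconn : G.Connected
  hcard : 2 ≤ S.card
  hsep : ∀ p ∈ convexHull ℝ (S : Set Pt), δ ≤ (p 0 - q 0) * n0 + (p 1 - q 1) * n1

namespace VS

variable (C : VS)

def F (p : Pt) : ℝ := (p 0 - C.q 0) * C.n0 + (p 1 - C.q 1) * C.n1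
def Hf (p : Pt) : ℝ := -((p 0 - C.q 0) * C.n1) + (p 1 - C.q 1) * C.n0
def X (z w : Pt) : ℝ := C.F z * C.Hf w - C.Hf z * C.F w
def sg (p : Pt) : ℝ := C.Hf p / C.F p

def U : Set Pt := ⋃ (e : ↥C.S × ↥C.S) (_ : C.G.Adj e.1 e.2), segment ℝ (e.1 : Pt) (e.2 : Pt)

def VIC : Prop := ∃ a b : ↥C.S, C.G.Adj a b ∧
      ∀ p ∈ interior (convexHull ℝ ({C.q, ↑a, ↑b} : Set Pt)),
        p ∉ (C.S : Set Pt) ∧ ∀ u v : ↥C.S, C.G.Adj u v → p ∉ segment ℝ (u : Pt) (v : Pt)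

/-! ### basic algebra -/

lemma F_q : C.F C.q = 0 := by simp [F]

lemma Hf_q : C.Hf C.q = 0 := by simp [Hf]

lemma F_combo {a b : Pt} {s t : ℝ} (h : s + t = 1) :
    C.F (s • a + t • b) = s * C.F a + t * C.F b := by
  have ht : t = 1 - s := by linarith
  subst ht
  simp only [F, PiLp.add_apply, PiLp.smul_apply, smul_eq_mul]
  ring

lemma Hf_combo {a b : Pt} {s t : ℝ} (h : s + t = 1) :
    C.Hf (s • a + t • b) = s * C.Hf a + t * C.Hf b := by
  have ht : t = 1 - s := by linarith
  subst ht
  simp only [Hf, PiLp.add_apply, PiLp.smul_apply, smul_eq_mul]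
  ring

lemma F_add_smul (p w : Pt) (t : ℝ) :
    C.F (p + t • w) = C.F p + t * (w 0 * C.n0 + w 1 * C.n1) := by
  simp only [F, PiLp.add_apply, PiLp.smul_apply, smul_eq_mul]; ring

lemma Hf_add_smul (p w : Pt) (t : ℝ) :
    C.Hf (p + t • w) = C.Hf p + t * (-(w 0 * C.n1) + w 1 * C.n0) := by
  simp only [Hf, PiLp.add_apply, PiLp.smul_apply, smul_eq_mul]; ring

lemma Fhull {p : Pt} (hp : p ∈ convexHull ℝ (C.S : Set Pt)) : C.δ ≤ C.F p := C.hsep p hp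

lemma FS {s : Pt} (hs : s ∈ C.S) : C.δ ≤ C.F s :=
  C.Fhull (subset_convexHull ℝ _ hs)

lemma FS' (s : ↥C.S) : 0 < C.F ↑s := lt_of_lt_of_le C.hδ (C.FS s.2)

lemma Fseg {x y : ↥C.S} {p : Pt} (hp : p ∈ segment ℝ (x : Pt) (y : Pt)) : C.δ ≤ C.F p :=
  C.Fhull ((convex_convexHull ℝ _).segment_subset
    (subset_convexHull ℝ _ x.2) (subset_convexHull ℝ _ y.2) hp)

lemma S_nonempty : C.S.Nonempty := Finset.card_pos.1 (lt_of_lt_of_le (by norm_num) C.hcard)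

lemma hN : 0 < C.n0 ^ 2 + C.n1 ^ 2 := by
  rcases C.S_nonempty with ⟨s, hs⟩
  by_contra h
  push_neg at h
  have h0 : C.n0 = 0 := by nlinarith [sq_nonneg C.n0, sq_nonneg C.n1]
  have h1 : C.n1 = 0 := by nlinarith [sq_nonneg C.n0, sq_nonneg C.n1]
  have := C.FS hs
  rw [F, h0, h1] at this
  nlinarith [C.hδ]

lemma point_eq {p p' : Pt} (h1 : C.F p = C.F p') (h2 : C.Hf p = C.Hf p') : p = p' := by
  have hN := C.hN
  simp only [F, Hf] at h1 h2
  have k0 : (p 0 - p' 0) * (C.n0^2 + C.n1^2) = 0 := by linear_combination C.n0 * h1 - C.n1 * h2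
  have k1 : (p 1 - p' 1) * (C.n0^2 + C.n1^2) = 0 := by linear_combination C.n1 * h1 + C.n0 * h2
  have e0 : p 0 = p' 0 := by
    rcases mul_eq_zero.1 k0 with h | h
    · linarith
    · exact absurd h hN.ne'
  have e1 : p 1 = p' 1 := by
    rcases mul_eq_zero.1 k1 with h | h
    · linarith
    · exact absurd h hN.ne'
  ext i
  fin_cases i <;> assumption

lemma X_swap (z w : Pt) : C.X w z = - C.X z w := by unfold X; ring

lemma sg_lt_sg {x y : Pt} (hx : 0 < C.F x) (hy : 0 < C.F y) :
    C.sg x < C.sg y ↔ 0 < C.X x y := by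
  unfold sg X
  rw [div_lt_div_iff₀ hx hy]
  constructor <;> intro h <;> nlinarith

lemma sg_le_sg {x y : Pt} (hx : 0 < C.F x) (hy : 0 < C.F y) :
    C.sg x ≤ C.sg y ↔ 0 ≤ C.X x y := by
  unfold sg X
  rw [div_le_div_iff₀ hx hy]
  constructor <;> intro h <;> nlinarith

lemma sg_eq_of_X {x y : Pt} (hx : 0 < C.F x) (hy : 0 < C.F y) (h : C.X x y = 0) :
    C.sg x = C.sg y := by
  unfold sg
  rw [div_eq_div_iff hx.ne' hy.ne']
  unfold X at h; nlinarith

lemma Hf_eq_sg_mul {p : Pt} (hp : 0 < C.F p) : C.Hf p = C.sg p * C.F p := by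
  unfold sg; field_simp

/-! ### chord parametrization -/

def den (x y : Pt) (s : ℝ) : ℝ := (C.Hf y - C.Hf x) - s * (C.F y - C.F x)
def tpar (x y : Pt) (s : ℝ) : ℝ := (s * C.F x - C.Hf x) / C.den x y s
def zpt (x y : Pt) (s : ℝ) : Pt := (1 - C.tpar x y s) • x + C.tpar x y s • y
def dep (x y : Pt) (s : ℝ) : ℝ := C.F (C.zpt x y s)

section param

variable {x y : Pt} (hx : 0 < C.F x) (hy : 0 < C.F y) (hD : 0 < C.X x y)

include hx hy hD

lemma sg_lt_sg' : C.sg x < C.sg y := (C.sg_lt_sg hx hy).2 hD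

lemma den_pos {s : ℝ} (hs1 : C.sg x ≤ s) (hs2 : s ≤ C.sg y) : 0 < C.den x y s := by
  have e1 : C.Hf x ≤ s * C.F x := by
    rw [sg, div_le_iff₀ hx] at hs1; linarith
  have e2 : s * C.F y ≤ C.Hf y := by
    rw [sg, le_div_iff₀ hy] at hs2; linarith
  have hden : C.den x y s = (C.Hf y - s * C.F y) + (s * C.F x - C.Hf x) := by
    unfold den; ring
  rcases lt_or_eq_of_le (by linarith : (0:ℝ) ≤ C.den x y s) with h | h
  · exact h
  · exfalso
    have z1 : C.Hf y - s * C.F y = 0 := by linarith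
    have z2 : s * C.F x - C.Hf x = 0 := by linarith
    have : C.X x y = 0 := by
      unfold X; linear_combination C.F x * z1 + C.F y * z2
    exact hD.ne' this

lemma tpar_left : C.tpar x y (C.sg x) = 0 := by
  unfold tpar
  have : C.sg x * C.F x - C.Hf x = 0 := by
    rw [Hf_eq_sg_mul C hx]; ring
  rw [this, zero_div]

lemma tpar_right : C.tpar x y (C.sg y) = 1 := by
  have hden := C.den_pos hx hy hD (le_of_lt (C.sg_lt_sg' hx hy hD)) (le_refl _)
  unfold tpar
  rw [div_eq_one_iff_eq hden.ne']
  unfold den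
  rw [Hf_eq_sg_mul C hy]; ring

lemma tpar_sub {s1 s2 : ℝ} (h1 : C.den x y s1 ≠ 0) (h2 : C.den x y s2 ≠ 0) :
    C.tpar x y s2 - C.tpar x y s1 = C.X x y * (s2 - s1) / (C.den x y s1 * C.den x y s2) := by
  unfold den at h1 h2
  unfold tpar den X
  rw [div_sub_div _ _ h2 h1, div_eq_div_iff (mul_ne_zero h2 h1) (mul_ne_zero h1 h2)]
  ring

lemma tpar_nonneg {s : ℝ} (hs1 : C.sg x ≤ s) (hs2 : s ≤ C.sg y) : 0 ≤ C.tpar x y s := by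
  have k := C.tpar_sub hx hy hD (x := x) (y := y)
      (C.den_pos hx hy hD (le_refl _) (le_of_lt (C.sg_lt_sg' hx hy hD))).ne'
      (C.den_pos hx hy hD hs1 hs2).ne'
  rw [C.tpar_left hx hy hD] at k
  have : 0 ≤ C.X x y * (s - C.sg x) / (C.den x y (C.sg x) * C.den x y s) := by
    apply div_nonneg
    · apply mul_nonneg hD.le; linarith
    · exact (mul_pos (C.den_pos hx hy hD (le_refl _) (le_of_lt (C.sg_lt_sg' hx hy hD)))
        (C.den_pos hx hy hD hs1 hs2)).le
  linarith

lemma tpar_le_one {s : ℝ} (hs1 : C.sg x ≤ s) (hs2 : s ≤ C.sg y) : C.tpar x y s ≤ 1 := by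
  have k := C.tpar_sub hx hy hD (x := x) (y := y)
      (C.den_pos hx hy hD hs1 hs2).ne'
      (C.den_pos hx hy hD (le_of_lt (C.sg_lt_sg' hx hy hD)) (le_refl _)).ne'
  rw [C.tpar_right hx hy hD] at k
  have : 0 ≤ C.X x y * (C.sg y - s) / (C.den x y s * C.den x y (C.sg y)) := by
    apply div_nonneg
    · apply mul_nonneg hD.le; linarith
    · exact (mul_pos (C.den_pos hx hy hD hs1 hs2)
        (C.den_pos hx hy hD (le_of_lt (C.sg_lt_sg' hx hy hD)) (le_refl _))).le
  linarith

lemma tpar_pos {s : ℝ} (hs1 : C.sg x < s) (hs2 : s ≤ C.sg y) : 0 < C.tpar x y s := by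
  have k := C.tpar_sub hx hy hD (x := x) (y := y)
      (C.den_pos hx hy hD (le_refl _) (le_of_lt (C.sg_lt_sg' hx hy hD))).ne'
      (C.den_pos hx hy hD hs1.le hs2).ne'
  rw [C.tpar_left hx hy hD] at k
  have : 0 < C.X x y * (s - C.sg x) / (C.den x y (C.sg x) * C.den x y s) := by
    apply div_pos
    · apply mul_pos hD; linarith
    · exact mul_pos (C.den_pos hx hy hD (le_refl _) (le_of_lt (C.sg_lt_sg' hx hy hD)))
        (C.den_pos hx hy hD hs1.le hs2)
  linarith

lemma tpar_lt_one {s : ℝ} (hs1 : C.sg x ≤ s) (hs2 : s < C.sg y) : C.tpar x y s < 1 := by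
  have k := C.tpar_sub hx hy hD (x := x) (y := y)
      (C.den_pos hx hy hD hs1 hs2.le).ne'
      (C.den_pos hx hy hD (le_of_lt (C.sg_lt_sg' hx hy hD)) (le_refl _)).ne'
  rw [C.tpar_right hx hy hD] at k
  have : 0 < C.X x y * (C.sg y - s) / (C.den x y s * C.den x y (C.sg y)) := by
    apply div_pos
    · apply mul_pos hD; linarith
    · exact mul_pos (C.den_pos hx hy hD hs1 hs2.le)
        (C.den_pos hx hy hD (le_of_lt (C.sg_lt_sg' hx hy hD)) (le_refl _))
  linarith

lemma zpt_mem {s : ℝ} (hs1 : C.sg x ≤ s) (hs2 : s ≤ C.sg y) :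
    C.zpt x y s ∈ segment ℝ x y :=
  ⟨1 - C.tpar x y s, C.tpar x y s,
    by have := C.tpar_le_one hx hy hD hs1 hs2; linarith,
    C.tpar_nonneg hx hy hD hs1 hs2, by ring, rfl⟩

lemma zpt_mem_open {s : ℝ} (hs1 : C.sg x < s) (hs2 : s < C.sg y) :
    C.zpt x y s ∈ openSegment ℝ x y :=
  ⟨1 - C.tpar x y s, C.tpar x y s,
    by have := C.tpar_lt_one hx hy hD hs1.le hs2; linarith,
    C.tpar_pos hx hy hD hs1 hs2.le, by ring, rfl⟩

omit hx hy hD in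
lemma F_zpt (s : ℝ) : C.F (C.zpt x y s) = C.F x + C.tpar x y s * (C.F y - C.F x) := by
  unfold zpt
  rw [C.F_combo (by ring : (1 - C.tpar x y s) + C.tpar x y s = 1)]
  ring

omit hx hy hD in
lemma Hf_zpt (s : ℝ) : C.Hf (C.zpt x y s) = C.Hf x + C.tpar x y s * (C.Hf y - C.Hf x) := by
  unfold zpt
  rw [C.Hf_combo (by ring : (1 - C.tpar x y s) + C.tpar x y s = 1)]
  ring

omit hx hy hD in
lemma dep_eq (s : ℝ) : C.dep x y s = C.F x + C.tpar x y s * (C.F y - C.F x) := C.F_zpt s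

lemma dep_pos {s : ℝ} (hs1 : C.sg x ≤ s) (hs2 : s ≤ C.sg y) : 0 < C.dep x y s := by
  rw [C.dep_eq]
  have h1 := C.tpar_nonneg hx hy hD hs1 hs2
  have h2 := C.tpar_le_one hx hy hD hs1 hs2
  nlinarith [mul_nonneg h1 hy.le, mul_nonneg (by linarith : (0:ℝ) ≤ 1 - C.tpar x y s) hx.le,
    mul_pos hx hy]

lemma Hf_zpt_eq {s : ℝ} (hs1 : C.sg x ≤ s) (hs2 : s ≤ C.sg y) :
    C.Hf (C.zpt x y s) = s * C.F (C.zpt x y s) := by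
  have hden := (C.den_pos hx hy hD hs1 hs2).ne'
  unfold den at hden
  rw [C.F_zpt, C.Hf_zpt]
  unfold tpar den
  field_simp
  ring

lemma sg_zpt {s : ℝ} (hs1 : C.sg x ≤ s) (hs2 : s ≤ C.sg y) :
    C.sg (C.zpt x y s) = s := by
  have hF := C.dep_pos hx hy hD hs1 hs2
  rw [dep] at hF
  unfold sg
  rw [C.Hf_zpt_eq hx hy hD hs1 hs2, mul_div_assoc, div_self hF.ne']
  ring

end param

/-! ### param inverse and continuity -/

section param2

variable {x y : Pt} (hx : 0 < C.F x) (hy : 0 < C.F y) (hD : 0 < C.X x y)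

include hx hy hD

omit hD in
lemma seg_F_pos {a b : ℝ} (ha : 0 ≤ a) (hb : 0 ≤ b) (hab : a + b = 1) :
    0 < a * C.F x + b * C.F y := by
  rcases le_total a (1/2) with h | h
  · nlinarith [mul_nonneg ha hx.le, mul_nonneg (by linarith : (0:ℝ) ≤ b - 1/2) hy.le]
  · nlinarith [mul_nonneg hb hy.le, mul_nonneg (by linarith : (0:ℝ) ≤ a - 1/2) hx.le]

lemma param_inv {p : Pt} {a b : ℝ} (ha : 0 ≤ a) (hb : 0 ≤ b) (hab : a + b = 1)
    (hp : p = a • x + b • y) :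
    0 < C.F p ∧ C.sg x ≤ C.sg p ∧ C.sg p ≤ C.sg y ∧ p = C.zpt x y (C.sg p) := by
  have ha1 : a = 1 - b := by linarith
  subst ha1
  have hFp : C.F p = (1-b) * C.F x + b * C.F y := by rw [hp, C.F_combo (by ring)]
  have hHp : C.Hf p = (1-b) * C.Hf x + b * C.Hf y := by rw [hp, C.Hf_combo (by ring)]
  have hFpos : 0 < C.F p := by rw [hFp]; exact C.seg_F_pos hx hy ha hb (by ring)
  have hXxp : C.X x p = b * C.X x y := by unfold X; rw [hFp, hHp]; ring
  have hXpy : C.X p y = (1-b) * C.X x y := by unfold X; rw [hFp, hHp]; ring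
  have s1 : C.sg x ≤ C.sg p := (C.sg_le_sg hx hFpos).2 (by rw [hXxp]; exact mul_nonneg hb hD.le)
  have s2 : C.sg p ≤ C.sg y :=
    (C.sg_le_sg hFpos hy).2 (by rw [hXpy]; exact mul_nonneg ha hD.le)
  have hden := C.den_pos hx hy hD s1 s2
  have tgoal : C.tpar x y (C.sg p) = b := by
    unfold tpar
    rw [div_eq_iff hden.ne']
    have hsgp : C.sg p * C.F p = C.Hf p := by
      unfold sg; field_simp
    rw [hFp, hHp] at hsgp
    unfold den
    linear_combination hsgp
  refine ⟨hFpos, s1, s2, ?_⟩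
  unfold zpt
  rw [tgoal, hp]

lemma tpar_contOn : ContinuousOn (C.tpar x y) (Set.Icc (C.sg x) (C.sg y)) := by
  unfold tpar den
  apply ContinuousOn.div
  · fun_prop
  · fun_prop
  · intro s hs
    have := C.den_pos hx hy hD hs.1 hs.2
    unfold den at this
    exact this.ne'

lemma dep_contOn : ContinuousOn (C.dep x y) (Set.Icc (C.sg x) (C.sg y)) := by
  have he : C.dep x y = fun s => C.F x + C.tpar x y s * (C.F y - C.F x) :=
    funext fun s => C.dep_eq s
  rw [he]
  exact (continuousOn_const.add ((C.tpar_contOn hx hy hD).mul continuousOn_const))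

end param2

/-! ### no crossings -/

lemma nocross {u v u' v' : ↥C.S} (h : C.G.Adj u v) (h' : C.G.Adj u' v')
    (hD : 0 < C.X ↑u ↑v) (hD' : 0 < C.X ↑u' ↑v') (hne : (u, v) ≠ (u', v')) {s : ℝ}
    (hs1 : C.sg ↑u < s) (hs2 : s < C.sg ↑v) (hs1' : C.sg ↑u' < s) (hs2' : s < C.sg ↑v')
    (heq : C.zpt ↑u ↑v s = C.zpt ↑u' ↑v' s) : False := by
  have hne2 : s(u, v) ≠ s(u', v') := by
    intro hcontra
    rw [Sym2.eq_iff] at hcontra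
    rcases hcontra with ⟨rfl, rfl⟩ | ⟨rfl, rfl⟩
    · exact hne rfl
    · linarith
  have e1m : s(u, v) ∈ C.G.edgeSet := C.G.mem_edgeSet.2 h
  have e2m : s(u', v') ∈ C.G.edgeSet := C.G.mem_edgeSet.2 h'
  refine C.hplane _ e1m _ e2m hne2 ⟨u, v, u', v', rfl, rfl, C.zpt ↑u ↑v s, ?_, ?_⟩
  · exact C.zpt_mem_open (C.FS' u) (C.FS' v) hD hs1 hs2
  · rw [heq]; exact C.zpt_mem_open (C.FS' u') (C.FS' v') hD' hs1' hs2'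

/-! ### edges, slopes, gaps -/

def EP : Finset (↥C.S × ↥C.S) :=
  Finset.univ.filter (fun e => C.G.Adj e.1 e.2 ∧ 0 < C.X ↑e.1 ↑e.2)

lemma EP_adj {e : ↥C.S × ↥C.S} (he : e ∈ C.EP) : C.G.Adj e.1 e.2 :=
  ((Finset.mem_filter.1 he).2).1

lemma EP_pos {e : ↥C.S × ↥C.S} (he : e ∈ C.EP) : 0 < C.X ↑e.1 ↑e.2 :=
  ((Finset.mem_filter.1 he).2).2

def V : Finset ℝ := C.S.image (fun p => C.sg p)

lemma sg_mem_V (w : ↥C.S) : C.sg ↑w ∈ C.V := Finset.mem_image_of_mem _ w.2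

def consec (a b : ℝ) : Prop := a ∈ C.V ∧ b ∈ C.V ∧ a < b ∧ ∀ v ∈ C.V, v ≤ a ∨ b ≤ v

def covers (e : ↥C.S × ↥C.S) (a b : ℝ) : Prop := C.sg ↑e.1 ≤ a ∧ b ≤ C.sg ↑e.2

def IsFront (e : ↥C.S × ↥C.S) (a b : ℝ) : Prop :=
  e ∈ C.EP ∧ C.covers e a b ∧
  ∀ e' ∈ C.EP, C.covers e' a b → e' ≠ e →
    ∀ s, a < s → s < b → C.dep ↑e.1 ↑e.2 s < C.dep ↑e'.1 ↑e'.2 s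

/-! ### connectivity and coverage -/

lemma adj_of_vertex (w : ↥C.S) : ∃ y : ↥C.S, C.G.Adj w y := by
  obtain ⟨w', hw', hne⟩ := Finset.exists_mem_ne
    (lt_of_lt_of_le one_lt_two C.hcard) (↑w : Pt)
  have hne2 : w ≠ (⟨w', hw'⟩ : ↥C.S) := by
    intro hcontra
    apply hne
    rw [hcontra]
  have hr : C.G.Reachable w ⟨w', hw'⟩ := C.hconn.preconnected w ⟨w', hw'⟩
  obtain ⟨p⟩ := hr
  cases p with
  | nil => exact absurd rfl hne2
  | cons h _ => exact ⟨_, h⟩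

lemma vertex_mem_U (w : ↥C.S) : (w : Pt) ∈ C.U := by
  obtain ⟨y, hy⟩ := C.adj_of_vertex w
  exact Set.mem_iUnion.2 ⟨(w, y), Set.mem_iUnion.2 ⟨hy, left_mem_segment ℝ _ _⟩⟩

lemma U_sub_hull : C.U ⊆ convexHull ℝ (C.S : Set Pt) := by
  rintro p hp
  obtain ⟨e, he⟩ := Set.mem_iUnion.1 hp
  obtain ⟨hadj, hseg⟩ := Set.mem_iUnion.1 he
  exact (convex_convexHull ℝ _).segment_subset
    (subset_convexHull ℝ _ e.1.2) (subset_convexHull ℝ _ e.2.2) hseg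

lemma FU {p : Pt} (hp : p ∈ C.U) : C.δ ≤ C.F p := C.Fhull (C.U_sub_hull hp)

lemma walk_conn {u v : ↥C.S} (w : C.G.Walk u v) :
    ∃ T : Set Pt, IsPreconnected T ∧ T ⊆ C.U ∧ (u : Pt) ∈ T ∧ (v : Pt) ∈ T := by
  induction w with
  | @nil a =>
    refine ⟨{(a : Pt)}, isPreconnected_singleton, ?_, Set.mem_singleton _, Set.mem_singleton _⟩
    simpa using C.vertex_mem_U a
  | @cons a b c h p ih =>
    obtain ⟨T, hT1, hT2, hTb, hTc⟩ := ih
    refine ⟨segment ℝ (a : Pt) (b : Pt) ∪ T,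
      IsPreconnected.union (b : Pt) (right_mem_segment ℝ _ _) hTb
        (convex_segment _ _).isPreconnected hT1, ?_, ?_, ?_⟩
    · apply Set.union_subset _ hT2
      intro z hz
      exact Set.mem_iUnion.2 ⟨(a, b), Set.mem_iUnion.2 ⟨h, hz⟩⟩
    · exact Or.inl (left_mem_segment ℝ _ _)
    · exact Or.inr hTc

lemma U_preconnected : IsPreconnected C.U := by
  apply isPreconnected_of_forall_pair
  intro p hp p' hp'
  obtain ⟨e, he⟩ := Set.mem_iUnion.1 hp
  obtain ⟨hadj, hseg⟩ := Set.mem_iUnion.1 he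
  obtain ⟨e', he'⟩ := Set.mem_iUnion.1 hp'
  obtain ⟨hadj', hseg'⟩ := Set.mem_iUnion.1 he'
  obtain ⟨Tw⟩ := C.hconn.preconnected e.2 e'.1
  obtain ⟨T, hT1, hT2, hTb, hTc⟩ := C.walk_conn Tw
  have seg1U : segment ℝ (e.1 : Pt) (e.2 : Pt) ⊆ C.U := fun z hz =>
    Set.mem_iUnion.2 ⟨e, Set.mem_iUnion.2 ⟨hadj, hz⟩⟩
  have seg2U : segment ℝ (e'.1 : Pt) (e'.2 : Pt) ⊆ C.U := fun z hz =>
    Set.mem_iUnion.2 ⟨e', Set.mem_iUnion.2 ⟨hadj', hz⟩⟩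
  refine ⟨segment ℝ (e.1 : Pt) (e.2 : Pt) ∪ (T ∪ segment ℝ (e'.1 : Pt) (e'.2 : Pt)), ?_, ?_, ?_, ?_⟩
  · exact Set.union_subset seg1U (Set.union_subset hT2 seg2U)
  · exact Or.inl hseg
  · exact Or.inr (Or.inr hseg')
  · refine IsPreconnected.union (e.2 : Pt) (right_mem_segment ℝ _ _) (Or.inl hTb)
      (convex_segment _ _).isPreconnected ?_
    exact IsPreconnected.union (e'.1 : Pt) hTc (left_mem_segment ℝ _ _) hT1
      (convex_segment _ _).isPreconnected

lemma F_continuous : Continuous C.F := by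
  unfold F
  fun_prop

lemma Hf_continuous : Continuous C.Hf := by
  unfold Hf
  fun_prop

lemma exists_U_sg {s : ℝ} (w1 w2 : ↥C.S) (h1 : C.sg ↑w1 ≤ s) (h2 : s ≤ C.sg ↑w2) :
    ∃ z ∈ C.U, C.sg z = s := by
  have himg : IsPreconnected (C.sg '' C.U) := by
    apply C.U_preconnected.image
    exact ContinuousOn.div C.Hf_continuous.continuousOn C.F_continuous.continuousOn
      (fun z hz => (lt_of_lt_of_le C.hδ (C.FU hz)).ne')
  have hoc := himg.ordConnected
  have hmem : s ∈ C.sg '' C.U :=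
    hoc.out (Set.mem_image_of_mem _ (C.vertex_mem_U w1))
      (Set.mem_image_of_mem _ (C.vertex_mem_U w2)) ⟨h1, h2⟩
  obtain ⟨z, hz, hzs⟩ := hmem
  exact ⟨z, hz, hzs⟩

lemma exists_cover (hNR : ∀ u v : ↥C.S, C.G.Adj u v → C.X ↑u ↑v ≠ 0) {s : ℝ}
    (w1 w2 : ↥C.S) (h1 : C.sg ↑w1 ≤ s) (h2 : s ≤ C.sg ↑w2) :
    ∃ e ∈ C.EP, C.sg ↑e.1 ≤ s ∧ s ≤ C.sg ↑e.2 := by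
  obtain ⟨z, hzU, hzs⟩ := C.exists_U_sg w1 w2 h1 h2
  obtain ⟨e, he⟩ := Set.mem_iUnion.1 hzU
  obtain ⟨hadj, hseg⟩ := Set.mem_iUnion.1 he
  obtain ⟨a, b, ha, hb, hab, hz⟩ := hseg
  rcases lt_trichotomy 0 (C.X ↑e.1 ↑e.2) with hpos | hzero | hneg
  · obtain ⟨_, s1, s2, _⟩ := C.param_inv (C.FS' e.1) (C.FS' e.2) hpos ha hb hab hz.symm
    refine ⟨e, Finset.mem_filter.2 ⟨Finset.mem_univ _, hadj, hpos⟩, ?_, ?_⟩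
    · rw [← hzs]; exact s1
    · rw [← hzs]; exact s2
  · exact absurd hzero.symm (hNR _ _ hadj)
  · have hpos : 0 < C.X ↑e.2 ↑e.1 := by rw [C.X_swap]; linarith
    obtain ⟨_, s1, s2, _⟩ := C.param_inv (p := z) (C.FS' e.2) (C.FS' e.1) hpos hb ha
      (by linarith) (by rw [← hz]; exact add_comm _ _)
    refine ⟨(e.2, e.1), Finset.mem_filter.2 ⟨Finset.mem_univ _, hadj.symm, hpos⟩, ?_, ?_⟩
    · rw [← hzs]; exact s1
    · rw [← hzs]; exact s2

/-! ### interior machinery -/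

lemma X_shift (p w y : Pt) (t : ℝ) :
    C.X (p + t • w) y = C.X p y +
      t * ((w 0 * C.n0 + w 1 * C.n1) * C.Hf y - (-(w 0 * C.n1) + w 1 * C.n0) * C.F y) := by
  unfold X
  rw [C.F_add_smul, C.Hf_add_smul]
  ring

lemma X_shift' (x p w : Pt) (t : ℝ) :
    C.X x (p + t • w) = C.X x p +
      t * (C.F x * (-(w 0 * C.n1) + w 1 * C.n0) - C.Hf x * (w 0 * C.n0 + w 1 * C.n1)) := by
  unfold X
  rw [C.F_add_smul, C.Hf_add_smul]
  ring

lemma coeff_qsub (x : Pt) : ((C.q - x) 0 * C.n0 + (C.q - x) 1 * C.n1 = - C.F x) ∧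
    (-((C.q - x) 0 * C.n1) + (C.q - x) 1 * C.n0 = - C.Hf x) := by
  constructor <;> (simp only [PiLp.sub_apply, F, Hf]; try ring)

lemma coeff_subq (x : Pt) : ((x - C.q) 0 * C.n0 + (x - C.q) 1 * C.n1 = C.F x) ∧
    (-((x - C.q) 0 * C.n1) + (x - C.q) 1 * C.n0 = C.Hf x) := by
  constructor <;> (simp only [PiLp.sub_apply, F, Hf]; try ring)

lemma convex_ge {L : Pt → ℝ}
    (haff : ∀ a b : Pt, ∀ s t : ℝ, s + t = 1 → L (s • a + t • b) = s * L a + t * L b) :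
    Convex ℝ {z | 0 ≤ L z} := by
  intro a ha b hb s t hs ht hst
  simp only [Set.mem_setOf_eq] at *
  rw [haff a b s t hst]
  exact add_nonneg (mul_nonneg hs ha) (mul_nonneg ht hb)

lemma convex_eq0 {L : Pt → ℝ}
    (haff : ∀ a b : Pt, ∀ s t : ℝ, s + t = 1 → L (s • a + t • b) = s * L a + t * L b) :
    Convex ℝ {z | L z = 0} := by
  intro a ha b hb s t hs ht hst
  simp only [Set.mem_setOf_eq] at *
  rw [haff a b s t hst, ha, hb]
  ring

lemma pos_of_interior {T : Set Pt} {p : Pt} (hp : p ∈ interior T) (L : Pt → ℝ)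
    (hTL : ∀ z ∈ T, 0 ≤ L z) (c : ℝ) (hc : c < 0) (w : Pt)
    (hL : ∀ t : ℝ, L (p + t • w) = L p + t * c) : 0 < L p := by
  rcases lt_or_eq_of_le (hTL p (interior_subset hp)) with h | h
  · exact h
  · exfalso
    have hT : T ∈ nhds p := mem_interior_iff_mem_nhds.1 hp
    obtain ⟨ε, hε, hball⟩ := Metric.mem_nhds_iff.1 hT
    set t := ε / (2 * (‖w‖ + 1)) with hto
    have htpos : 0 < t := by positivity
    have hmem : p + t • w ∈ T := by
      apply hball
      rw [Metric.mem_ball, dist_eq_norm]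
      have h2 : p + t • w - p = t • w := by abel
      rw [h2, norm_smul, Real.norm_eq_abs, abs_of_pos htpos, hto]
      rw [div_mul_eq_mul_div, div_lt_iff₀ (by positivity)]
      nlinarith [norm_nonneg w]
    have hge := hTL _ hmem
    rw [hL t, ← h] at hge
    nlinarith

lemma aff_X_right (y : Pt) : ∀ a b : Pt, ∀ s t : ℝ, s + t = 1 →
    C.X (s • a + t • b) y = s * C.X a y + t * C.X b y := by
  intro a b s t hst
  unfold X
  rw [C.F_combo hst, C.Hf_combo hst]
  ring

lemma aff_X_left (x : Pt) : ∀ a b : Pt, ∀ s t : ℝ, s + t = 1 →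
    C.X x (s • a + t • b) = s * C.X x a + t * C.X x b := by
  intro a b s t hst
  unfold X
  rw [C.F_combo hst, C.Hf_combo hst]
  ring

lemma X_self (x : Pt) : C.X x x = 0 := by unfold X; ring

lemma interior_strict {x y : Pt} (hx : 0 < C.F x) (hy : 0 < C.F y) (hD : 0 < C.X x y)
    {p : Pt} (hp : p ∈ interior (convexHull ℝ ({C.q, x, y} : Set Pt))) :
    0 < C.X p y ∧ 0 < C.X x p ∧ C.X p y + C.X x p < C.X x y := by
  have hvert : ∀ z ∈ ({C.q, x, y} : Set Pt), z = C.q ∨ z = x ∨ z = y := by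
    intro z hz
    simpa [Set.mem_insert_iff, Set.mem_singleton_iff] using hz
  have hXq1 : C.X C.q y = 0 := by unfold X; rw [C.F_q, C.Hf_q]; ring
  have hXq2 : C.X x C.q = 0 := by unfold X; rw [C.F_q, C.Hf_q]; ring
  have hsub1 : convexHull ℝ ({C.q, x, y} : Set Pt) ⊆ {z | 0 ≤ C.X z y} := by
    apply convexHull_min _ (convex_ge (C.aff_X_right y))
    intro z hz
    rcases hvert z hz with h | h | h <;> simp only [Set.mem_setOf_eq, h]
    · rw [hXq1]
    · exact hD.le
    · rw [C.X_self]
  have hsub2 : convexHull ℝ ({C.q, x, y} : Set Pt) ⊆ {z | 0 ≤ C.X x z} := by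
    apply convexHull_min _ (convex_ge (C.aff_X_left x))
    intro z hz
    rcases hvert z hz with h | h | h <;> simp only [Set.mem_setOf_eq, h]
    · rw [hXq2]
    · rw [C.X_self]
    · exact hD.le
  have hsub3 : convexHull ℝ ({C.q, x, y} : Set Pt) ⊆ {z | 0 ≤ C.X x y - C.X z y - C.X x z} := by
    have haff : ∀ a b : Pt, ∀ s t : ℝ, s + t = 1 →
        (C.X x y - C.X (s • a + t • b) y - C.X x (s • a + t • b)) =
          s * (C.X x y - C.X a y - C.X x a) + t * (C.X x y - C.X b y - C.X x b) := by
      intro a b s t hst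
      rw [C.aff_X_right y _ _ _ _ hst, C.aff_X_left x _ _ _ _ hst]
      linear_combination (-(C.X x y)) * hst
    apply convexHull_min _ (convex_ge haff)
    intro z hz
    rcases hvert z hz with h | h | h <;> simp only [Set.mem_setOf_eq, h]
    · rw [hXq1, hXq2]; linarith
    · rw [C.X_self]; linarith
    · rw [C.X_self]; linarith
  refine ⟨?_, ?_, ?_⟩
  · apply pos_of_interior hp _ (fun z hz => hsub1 hz) (-(C.X x y)) (by linarith) (C.q - x)
    intro t
    rw [C.X_shift, (C.coeff_qsub x).1, (C.coeff_qsub x).2]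
    unfold X
    ring
  · apply pos_of_interior hp _ (fun z hz => hsub2 hz) (-(C.X x y)) (by linarith) (C.q - y)
    intro t
    rw [C.X_shift', (C.coeff_qsub y).1, (C.coeff_qsub y).2]
    unfold X
    ring
  · have := pos_of_interior hp _ (fun z hz => hsub3 hz) (-(C.X x y)) (by linarith) (x - C.q) ?_
    · linarith
    · intro t
      rw [C.X_shift, C.X_shift', (C.coeff_subq x).1, (C.coeff_subq x).2]
      unfold X
      ring

lemma radial_empty {x y : Pt} (hy : 0 < C.F y) (h0 : C.X x y = 0)
    {p : Pt} (hp : p ∈ interior (convexHull ℝ ({C.q, x, y} : Set Pt))) : False := by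
  have hvert : ∀ z ∈ ({C.q, x, y} : Set Pt), z = C.q ∨ z = x ∨ z = y := by
    intro z hz
    simpa [Set.mem_insert_iff, Set.mem_singleton_iff] using hz
  have hXq1 : C.X C.q y = 0 := by unfold X; rw [C.F_q, C.Hf_q]; ring
  have hsub : convexHull ℝ ({C.q, x, y} : Set Pt) ⊆ {z | C.X z y = 0} := by
    apply convexHull_min _ (convex_eq0 (C.aff_X_right y))
    intro z hz
    rcases hvert z hz with h | h | h <;> simp only [Set.mem_setOf_eq, h]
    · exact hXq1
    · exact h0
    · exact C.X_self y
  set w : Pt := (WithLp.equiv 2 (Fin 2 → ℝ)).symm ![-C.n1, C.n0] with hw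
  have hw0 : w 0 = -C.n1 := rfl
  have hw1 : w 1 = C.n0 := rfl
  have hT : convexHull ℝ ({C.q, x, y} : Set Pt) ∈ nhds p := mem_interior_iff_mem_nhds.1 hp
  obtain ⟨ε, hε, hball⟩ := Metric.mem_nhds_iff.1 hT
  set t := ε / (2 * (‖w‖ + 1)) with hto
  have htpos : 0 < t := by positivity
  have hmem : p + t • w ∈ convexHull ℝ ({C.q, x, y} : Set Pt) := by
    apply hball
    rw [Metric.mem_ball, dist_eq_norm]
    have h2 : p + t • w - p = t • w := by abel
    rw [h2, norm_smul, Real.norm_eq_abs, abs_of_pos htpos, hto]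
    rw [div_mul_eq_mul_div, div_lt_iff₀ (by positivity)]
    nlinarith [norm_nonneg w]
  have h1 := hsub hmem
  have h0' := hsub (interior_subset hp)
  simp only [Set.mem_setOf_eq] at h1 h0'
  rw [C.X_shift, hw0, hw1, h0'] at h1
  have hN := C.hN
  have : (-C.n1 * C.n0 + C.n0 * C.n1) * C.Hf y - (-(-C.n1 * C.n1) + C.n0 * C.n0) * C.F y
      = -((C.n0^2 + C.n1^2) * C.F y) := by ring
  rw [this] at h1
  nlinarith [mul_pos htpos (mul_pos hN hy)]

lemma interior_data {x y : Pt} (hx : 0 < C.F x) (hy : 0 < C.F y) (hD : 0 < C.X x y)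
    {p : Pt} (hp : p ∈ interior (convexHull ℝ ({C.q, x, y} : Set Pt))) :
    0 < C.F p ∧ C.sg x < C.sg p ∧ C.sg p < C.sg y ∧ C.F p < C.dep x y (C.sg p) := by
  obtain ⟨h1, h2, h3⟩ := C.interior_strict hx hy hD hp
  have idF : C.F p * C.X x y = C.X p y * C.F x + C.X x p * C.F y := by unfold X; ring
  have hFp : 0 < C.F p := by nlinarith
  have hs1 : C.sg x < C.sg p := (C.sg_lt_sg hx hFp).2 h2
  have hs2 : C.sg p < C.sg y := (C.sg_lt_sg hFp hy).2 h1
  refine ⟨hFp, hs1, hs2, ?_⟩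
  set z := C.zpt x y (C.sg p) with hz
  have hFz : 0 < C.F z := by
    have := C.dep_pos hx hy hD hs1.le hs2.le
    rwa [dep] at this
  have hHz : C.Hf z = C.sg p * C.F z := C.Hf_zpt_eq hx hy hD hs1.le hs2.le
  have hHp : C.Hf p = C.sg p * C.F p := C.Hf_eq_sg_mul hFp
  have k1 : C.X p y * C.F z = C.F p * C.X z y := by unfold X; rw [hHp, hHz]; ring
  have k2 : C.X x p * C.F z = C.F p * C.X x z := by unfold X; rw [hHp, hHz]; ring
  have e1 : C.X z y = (1 - C.tpar x y (C.sg p)) * C.X x y := by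
    rw [hz]; unfold X; rw [C.F_zpt, C.Hf_zpt]; ring
  have e2 : C.X x z = C.tpar x y (C.sg p) * C.X x y := by
    rw [hz]; unfold X; rw [C.F_zpt, C.Hf_zpt]; ring
  have ksum : C.X z y + C.X x z = C.X x y := by rw [e1, e2]; ring
  have key : (C.F z - C.F p) * C.X x y = (C.X x y - C.X p y - C.X x p) * C.F z := by
    linear_combination k1 + k2 + C.F p * ksum
  have : 0 < C.F z - C.F p := by nlinarith
  have hdep : C.dep x y (C.sg p) = C.F z := rfl
  linarith

/-! ### fronts -/

lemma cross_of_dep_eq {e e' : ↥C.S × ↥C.S} (he : e ∈ C.EP) (he' : e' ∈ C.EP) (hne : e ≠ e')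
    {s : ℝ} (h1 : C.sg ↑e.1 < s) (h2 : s < C.sg ↑e.2) (h1' : C.sg ↑e'.1 < s)
    (h2' : s < C.sg ↑e'.2) (heq : C.dep ↑e.1 ↑e.2 s = C.dep ↑e'.1 ↑e'.2 s) : False := by
  have hz : C.zpt ↑e.1 ↑e.2 s = C.zpt ↑e'.1 ↑e'.2 s := by
    apply C.point_eq heq
    rw [C.Hf_zpt_eq (C.FS' e.1) (C.FS' e.2) (C.EP_pos he) h1.le h2.le,
      C.Hf_zpt_eq (C.FS' e'.1) (C.FS' e'.2) (C.EP_pos he') h1'.le h2'.le]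
    rw [show C.F (C.zpt ↑e.1 ↑e.2 s) = C.dep ↑e.1 ↑e.2 s from rfl,
      show C.F (C.zpt ↑e'.1 ↑e'.2 s) = C.dep ↑e'.1 ↑e'.2 s from rfl, heq]
  exact C.nocross (C.EP_adj he) (C.EP_adj he') (C.EP_pos he) (C.EP_pos he')
    (by simpa using hne) h1 h2 h1' h2' hz

lemma covers_of_mid {e : ↥C.S × ↥C.S} (hE : e ∈ C.EP) {a b m : ℝ} (hc : C.consec a b)
    (hm1 : a < m) (hm2 : m < b) (h1 : C.sg ↑e.1 ≤ m) (h2 : m ≤ C.sg ↑e.2) :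
    C.covers e a b := by
  obtain ⟨ha, hb, hab, hcons⟩ := hc
  constructor
  · rcases hcons _ (C.sg_mem_V e.1) with h | h
    · exact h
    · linarith
  · rcases hcons _ (C.sg_mem_V e.2) with h | h
    · linarith
    · exact h

lemma sign_stable {f g : ℝ → ℝ} {a b m s : ℝ} (ham : a < m) (hmb : m < b)
    (has : a < s) (hsb : s < b)
    (hf : ContinuousOn (fun t => g t - f t) (Set.Icc a b))
    (hne : ∀ t, a < t → t < b → f t ≠ g t) (hm : f m < g m) : f s < g s := by
  by_contra hcon
  push_neg at hcon
  have hlt : g s < f s := lt_of_le_of_ne hcon fun h => (hne s has hsb) h.symm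
  rcases le_total m s with h | h
  · have hsub : Set.Icc m s ⊆ Set.Icc a b := Set.Icc_subset_Icc ham.le hsb.le
    have := intermediate_value_Icc' h (hf.mono hsub)
    have h0 : (0:ℝ) ∈ Set.Icc (g s - f s) (g m - f m) := ⟨by linarith, by linarith⟩
    obtain ⟨t, ht, hteq⟩ := this h0
    have hteq' : g t - f t = 0 := hteq
    exact hne t (by linarith [ht.1]) (by linarith [ht.2]) (by linarith)
  · have hsub : Set.Icc s m ⊆ Set.Icc a b := Set.Icc_subset_Icc has.le hmb.le
    have := intermediate_value_Icc h (hf.mono hsub)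
    have h0 : (0:ℝ) ∈ Set.Icc (g s - f s) (g m - f m) := ⟨by linarith, by linarith⟩
    obtain ⟨t, ht, hteq⟩ := this h0
    have hteq' : g t - f t = 0 := hteq
    exact hne t (by linarith [ht.1]) (by linarith [ht.2]) (by linarith)

lemma dep_contOn_sub {e e' : ↥C.S × ↥C.S} (he : e ∈ C.EP) (he' : e' ∈ C.EP) {a b : ℝ}
    (hcov : C.covers e a b) (hcov' : C.covers e' a b) :
    ContinuousOn (fun t => C.dep ↑e'.1 ↑e'.2 t - C.dep ↑e.1 ↑e.2 t) (Set.Icc a b) := by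
  apply ContinuousOn.sub
  · exact (C.dep_contOn (C.FS' e'.1) (C.FS' e'.2) (C.EP_pos he')).mono
      (Set.Icc_subset_Icc hcov'.1 hcov'.2)
  · exact (C.dep_contOn (C.FS' e.1) (C.FS' e.2) (C.EP_pos he)).mono
      (Set.Icc_subset_Icc hcov.1 hcov.2)

lemma exists_V_vertex {a : ℝ} (ha : a ∈ C.V) : ∃ w : ↥C.S, C.sg ↑w = a := by
  obtain ⟨p, hp, hpa⟩ := Finset.mem_image.1 ha
  exact ⟨⟨p, hp⟩, hpa⟩

lemma front_exists (hNR : ∀ u v : ↥C.S, C.G.Adj u v → C.X ↑u ↑v ≠ 0) {a b : ℝ}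
    (hc : C.consec a b) : ∃ f, C.IsFront f a b := by
  obtain ⟨w1, hw1⟩ := C.exists_V_vertex hc.1
  obtain ⟨w2, hw2⟩ := C.exists_V_vertex hc.2.1
  have hab := hc.2.2.1
  set m := (a + b) / 2 with hm
  have hm1 : a < m := by rw [hm]; linarith
  have hm2 : m < b := by rw [hm]; linarith
  obtain ⟨e0, he0, hcov0⟩ := C.exists_cover hNR (s := m) w1 w2
    (hw1.le.trans hm1.le) (hm2.le.trans hw2.ge)
  set Ecov := C.EP.filter (fun e => C.covers e a b) with hEcov
  have hne0 : Ecov.Nonempty :=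
    ⟨e0, Finset.mem_filter.2 ⟨he0, C.covers_of_mid he0 hc hm1 hm2 hcov0.1 hcov0.2⟩⟩
  obtain ⟨f, hf, hfmin⟩ := Finset.exists_min_image Ecov (fun e => C.dep ↑e.1 ↑e.2 m) hne0
  have hfEP := (Finset.mem_filter.1 hf).1
  have hfcov := (Finset.mem_filter.1 hf).2
  refine ⟨f, hfEP, hfcov, ?_⟩
  intro e' he' hcov' hne s hs1 hs2
  have he'mem : e' ∈ Ecov := Finset.mem_filter.2 ⟨he', hcov'⟩
  have hmin := hfmin e' he'mem
  have hnedep : ∀ t, a < t → t < b → C.dep ↑f.1 ↑f.2 t ≠ C.dep ↑e'.1 ↑e'.2 t := by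
    intro t ht1 ht2 heq
    exact C.cross_of_dep_eq hfEP he' (fun h => hne (h ▸ rfl)) (lt_of_le_of_lt hfcov.1 ht1)
      (lt_of_lt_of_le ht2 hfcov.2) (lt_of_le_of_lt hcov'.1 ht1)
      (lt_of_lt_of_le ht2 hcov'.2) heq
  have hstrict : C.dep ↑f.1 ↑f.2 m < C.dep ↑e'.1 ↑e'.2 m :=
    lt_of_le_of_ne hmin (hnedep m hm1 hm2)
  exact sign_stable hm1 hm2 hs1 hs2 (C.dep_contOn_sub hfEP he' hfcov hcov') hnedep hstrict

lemma boundary {a b c : ℝ} (hab : C.consec a b) (hbc : C.consec b c)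
    {f f' : ↥C.S × ↥C.S} (hf : C.IsFront f a b) (hf' : C.IsFront f' b c) (hne : f ≠ f') :
    C.sg ↑f.2 = b ∨ C.sg ↑f'.1 = b := by
  by_contra hcon
  push_neg at hcon
  obtain ⟨h1, h2⟩ := hcon
  -- f covers (b,c)
  have hfc : C.covers f b c := by
    refine ⟨hf.2.1.1.trans hab.2.2.1.le, ?_⟩
    have hgt : b < C.sg ↑f.2 := lt_of_le_of_ne hf.2.1.2 (Ne.symm h1)
    rcases hbc.2.2.2 _ (C.sg_mem_V f.2) with h | h
    · linarith
    · exact h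
  -- f' covers (a,b)
  have hf'c : C.covers f' a b := by
    constructor
    · have hlt : C.sg ↑f'.1 < b := lt_of_le_of_ne hf'.2.1.1 h2
      rcases hab.2.2.2 _ (C.sg_mem_V f'.1) with h | h
      · exact h
      · linarith
    · exact hbc.2.2.1.le.trans hf'.2.1.2
  set m1 := (a + b) / 2 with hm1d
  set m2 := (b + c) / 2 with hm2d
  have hab' := hab.2.2.1
  have hbc' := hbc.2.2.1
  have hm1a : a < m1 := by rw [hm1d]; linarith
  have hm1b : m1 < b := by rw [hm1d]; linarith
  have hm2b : b < m2 := by rw [hm2d]; linarith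
  have hm2c : m2 < c := by rw [hm2d]; linarith
  have s1 : C.dep ↑f.1 ↑f.2 m1 < C.dep ↑f'.1 ↑f'.2 m1 :=
    hf.2.2 f' hf'.1 hf'c (Ne.symm hne) m1 hm1a hm1b
  have s2 : C.dep ↑f'.1 ↑f'.2 m2 < C.dep ↑f.1 ↑f.2 m2 :=
    hf'.2.2 f hf.1 hfc hne m2 hm2b hm2c
  have covfac : C.covers f a c := ⟨hf.2.1.1, hfc.2⟩
  have covf'ac : C.covers f' a c := ⟨hf'c.1, hf'.2.1.2⟩
  have hcont : ContinuousOn (fun t => C.dep ↑f'.1 ↑f'.2 t - C.dep ↑f.1 ↑f.2 t)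
      (Set.Icc m1 m2) :=
    (C.dep_contOn_sub hf.1 hf'.1 covfac covf'ac).mono
      (Set.Icc_subset_Icc hm1a.le hm2c.le)
  have hIVT := intermediate_value_Icc' (by linarith : m1 ≤ m2) hcont
  have h0mem : (0:ℝ) ∈ Set.Icc (C.dep ↑f'.1 ↑f'.2 m2 - C.dep ↑f.1 ↑f.2 m2)
      (C.dep ↑f'.1 ↑f'.2 m1 - C.dep ↑f.1 ↑f.2 m1) := ⟨by linarith, by linarith⟩
  obtain ⟨t, ht, hteq⟩ := hIVT h0mem
  have hteq' : C.dep ↑f'.1 ↑f'.2 t - C.dep ↑f.1 ↑f.2 t = 0 := hteq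
  exact C.cross_of_dep_eq hf.1 hf'.1 hne
    (lt_of_le_of_lt covfac.1 (lt_of_lt_of_le hm1a ht.1))
    (lt_of_lt_of_le (lt_of_le_of_lt ht.2 hm2c) covfac.2)
    (lt_of_le_of_lt covf'ac.1 (lt_of_lt_of_le hm1a ht.1))
    (lt_of_lt_of_le (lt_of_le_of_lt ht.2 hm2c) covf'ac.2)
    (by linarith)

/-! ### full fronts and the final visibility lemma -/

def FullFront (e : ↥C.S × ↥C.S) : Prop :=
  e ∈ C.EP ∧ ∀ a b, C.consec a b → C.sg ↑e.1 ≤ a → b ≤ C.sg ↑e.2 → C.IsFront e a b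

lemma X_phi (x y : Pt) (t t' : ℝ) :
    C.X ((1-t) • x + t • y) ((1-t') • x + t' • y) = (t' - t) * C.X x y := by
  unfold X
  rw [C.F_combo (by ring : (1-t) + t = 1), C.Hf_combo (by ring : (1-t) + t = 1),
    C.F_combo (by ring : (1-t') + t' = 1), C.Hf_combo (by ring : (1-t') + t' = 1)]
  ring

lemma X_eq_zero_of_sg_eq {z w : Pt} (hz : 0 < C.F z) (hw : 0 < C.F w)
    (h : C.sg z = C.sg w) : C.X z w = 0 := by
  unfold sg at h
  rw [div_eq_div_iff hz.ne' hw.ne'] at h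
  unfold X
  linarith

lemma U_rep (hNR : ∀ u v : ↥C.S, C.G.Adj u v → C.X ↑u ↑v ≠ 0) {p : Pt} (hp : p ∈ C.U) :
    ∃ g ∈ C.EP, ∃ a b : ℝ, 0 ≤ a ∧ 0 ≤ b ∧ a + b = 1 ∧ p = a • (↑g.1 : Pt) + b • ↑g.2 := by
  obtain ⟨g, hg⟩ := Set.mem_iUnion.1 hp
  obtain ⟨hadj, hseg⟩ := Set.mem_iUnion.1 hg
  obtain ⟨a, b, ha, hb, hab, hz⟩ := hseg
  rcases lt_trichotomy 0 (C.X ↑g.1 ↑g.2) with hpos | hzero | hneg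
  · exact ⟨g, Finset.mem_filter.2 ⟨Finset.mem_univ _, hadj, hpos⟩, a, b, ha, hb, hab, hz.symm⟩
  · exact absurd hzero.symm (hNR _ _ hadj)
  · have hpos : 0 < C.X ↑g.2 ↑g.1 := by rw [C.X_swap]; linarith
    exact ⟨(g.2, g.1), Finset.mem_filter.2 ⟨Finset.mem_univ _, hadj.symm, hpos⟩, b, a, hb, ha,
      by linarith, by rw [← hz]; exact add_comm _ _⟩

lemma locate_gap {s : ℝ} (hne1 : (C.V.filter (· < s)).Nonempty)
    (hne2 : (C.V.filter (s < ·)).Nonempty) (hnotV : s ∉ C.V) :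
    ∃ A B, C.consec A B ∧ A < s ∧ s < B ∧
      (∀ v ∈ C.V, v < s → v ≤ A) ∧ (∀ v ∈ C.V, s < v → B ≤ v) := by
  have hAp : (C.V.filter (· < s)).max' hne1 < s :=
    (Finset.mem_filter.1 (Finset.max'_mem _ hne1)).2
  have hpB : s < (C.V.filter (s < ·)).min' hne2 :=
    (Finset.mem_filter.1 (Finset.min'_mem _ hne2)).2
  have hAV : (C.V.filter (· < s)).max' hne1 ∈ C.V :=
    (Finset.mem_filter.1 (Finset.max'_mem _ hne1)).1
  have hBV : (C.V.filter (s < ·)).min' hne2 ∈ C.V :=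
    (Finset.mem_filter.1 (Finset.min'_mem _ hne2)).1
  have hmaxA : ∀ v ∈ C.V, v < s → v ≤ (C.V.filter (· < s)).max' hne1 := fun v hv h =>
    Finset.le_max' (C.V.filter (· < s)) v (Finset.mem_filter.2 ⟨hv, h⟩)
  have hminB : ∀ v ∈ C.V, s < v → (C.V.filter (s < ·)).min' hne2 ≤ v := fun v hv h =>
    Finset.min'_le (C.V.filter (s < ·)) v (Finset.mem_filter.2 ⟨hv, h⟩)
  refine ⟨_, _, ⟨hAV, hBV, by linarith, ?_⟩, hAp, hpB, hmaxA, hminB⟩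
  intro v hv
  rcases lt_trichotomy v s with h | h | h
  · exact Or.inl (hmaxA v hv h)
  · exact absurd (h ▸ hv) hnotV
  · exact Or.inr (hminB v hv h)

lemma gap_contra (hNR : ∀ u v : ↥C.S, C.G.Adj u v → C.X ↑u ↑v ≠ 0)
    {e g : ↥C.S × ↥C.S} (hFF : C.FullFront e) (hgEP : g ∈ C.EP) (hge : g ≠ e) {p : Pt}
    (hpint : p ∈ interior (convexHull ℝ ({C.q, ↑e.1, ↑e.2} : Set Pt)))
    (hrep : ∃ a b : ℝ, 0 ≤ a ∧ 0 ≤ b ∧ a + b = 1 ∧ p = a • (↑g.1 : Pt) + b • ↑g.2)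
    (hnotV : C.sg p ∉ C.V) : False := by
  obtain ⟨hFp, hs1, hs2, hdepgt⟩ :=
    C.interior_data (C.FS' e.1) (C.FS' e.2) (C.EP_pos hFF.1) hpint
  obtain ⟨a, b, ha, hb, hab, hrep'⟩ := hrep
  obtain ⟨hFp', hg1, hg2, hzg⟩ :=
    C.param_inv (C.FS' g.1) (C.FS' g.2) (C.EP_pos hgEP) ha hb hab hrep'
  have hdepg : C.dep ↑g.1 ↑g.2 (C.sg p) = C.F p := by
    unfold dep; rw [← hzg]
  -- locate the gap around sg p
  obtain ⟨A, B, hcons, hAp, hpB, hmaxA, hminB⟩ := C.locate_gap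
    ⟨C.sg ↑e.1, Finset.mem_filter.2 ⟨C.sg_mem_V e.1, hs1⟩⟩
    ⟨C.sg ↑e.2, Finset.mem_filter.2 ⟨C.sg_mem_V e.2, hs2⟩⟩ hnotV
  have hecov1 : C.sg ↑e.1 ≤ A := hmaxA _ (C.sg_mem_V e.1) hs1
  have hecov2 : B ≤ C.sg ↑e.2 := hminB _ (C.sg_mem_V e.2) hs2
  have hgcov1 : C.sg ↑g.1 ≤ A :=
    hmaxA _ (C.sg_mem_V g.1) (lt_of_le_of_ne hg1 (fun h => hnotV (h ▸ C.sg_mem_V g.1)))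
  have hgcov2 : B ≤ C.sg ↑g.2 :=
    hminB _ (C.sg_mem_V g.2) (lt_of_le_of_ne hg2 (fun h => hnotV (h.symm ▸ C.sg_mem_V g.2)))
  have hfront := hFF.2 A B hcons hecov1 hecov2
  have := hfront.2.2 g hgEP ⟨hgcov1, hgcov2⟩ hge (C.sg p) hAp hpB
  rw [hdepg] at this
  linarith

lemma perturb {g : ↥C.S × ↥C.S} (hgEP : g ∈ C.EP) {p : Pt} {T : Set Pt}
    (hpi : p ∈ interior T) {a b : ℝ} (ha : 0 ≤ a) (hb : 0 ≤ b) (hab : a + b = 1)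
    (hrep : p = a • (↑g.1 : Pt) + b • ↑g.2) :
    ∃ p' ∈ interior T, (∃ a' b' : ℝ, 0 ≤ a' ∧ 0 ≤ b' ∧ a' + b' = 1 ∧
      p' = a' • (↑g.1 : Pt) + b' • ↑g.2) ∧ C.sg p' ∉ C.V := by
  classical
  set φ : ℝ → Pt := fun t => (1 - t) • (↑g.1 : Pt) + t • ↑g.2 with hφ
  have hφc : Continuous φ := by
    apply Continuous.add
    · exact (continuous_const.sub continuous_id).smul continuous_const
    · exact continuous_id.smul continuous_const
  have hpb : φ b = p := by
    rw [hrep]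
    show (1 - b) • (↑g.1 : Pt) + b • ↑g.2 = a • ↑g.1 + b • ↑g.2
    rw [show (1:ℝ) - b = a by linarith]
  have hW : IsOpen (φ ⁻¹' interior T) := (isOpen_interior).preimage hφc
  have hbW : b ∈ φ ⁻¹' interior T := by rw [Set.mem_preimage, hpb]; exact hpi
  obtain ⟨ε, hε, hball⟩ := Metric.isOpen_iff.1 hW b hbW
  -- choose a nondegenerate open interval J ⊆ ball ∩ [0,1]
  obtain ⟨l, r, hlr, hJsub, hJ01⟩ :
      ∃ l r : ℝ, l < r ∧ Set.Ioo l r ⊆ Metric.ball b ε ∧ Set.Ioo l r ⊆ Set.Icc 0 1 := by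
    rcases lt_or_eq_of_le (by linarith : b ≤ 1) with h1 | h1
    · refine ⟨b, min 1 (b + ε), lt_min h1 (by linarith), ?_, ?_⟩
      · intro t ht
        rw [Real.ball_eq_Ioo]
        constructor
        · linarith [ht.1]
        · exact lt_of_lt_of_le ht.2 (min_le_right _ _)
      · intro t ht
        constructor
        · linarith [ht.1]
        · exact le_of_lt (lt_of_lt_of_le ht.2 (min_le_left _ _))
    · refine ⟨max 0 (b - ε), b, max_lt (by linarith) (by linarith), ?_, ?_⟩
      · intro t ht
        rw [Real.ball_eq_Ioo]
        constructor
        · exact lt_of_le_of_lt (le_max_right _ _) ht.1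
        · linarith [ht.2]
      · intro t ht
        constructor
        · exact le_of_lt (lt_of_le_of_lt (le_max_left _ _) ht.1)
        · rw [← h1]; exact le_of_lt ht.2
  -- σ∘φ is injective on [0,1]
  have hFφ : ∀ t ∈ Set.Icc (0:ℝ) 1, 0 < C.F (φ t) := by
    intro t ht
    have : φ t ∈ segment ℝ (↑g.1 : Pt) ↑g.2 := ⟨1 - t, t, by linarith [ht.2], ht.1, by ring, rfl⟩
    exact lt_of_lt_of_le C.hδ (C.Fseg this)
  have hinj : Set.InjOn (fun t => C.sg (φ t)) (Set.Ioo l r) := by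
    intro t ht t' ht' heq
    have h0 := C.X_eq_zero_of_sg_eq (hFφ t (hJ01 ht)) (hFφ t' (hJ01 ht')) heq
    rw [hφ] at h0
    rw [C.X_phi] at h0
    have := C.EP_pos hgEP
    rcases mul_eq_zero.1 h0 with h | h
    · linarith
    · exact absurd h this.ne'
  -- the set of bad parameters is finite
  have hbad : (Set.Ioo l r ∩ (fun t => C.sg (φ t)) ⁻¹' (C.V : Set ℝ)).Finite := by
    apply Set.Finite.of_finite_image _ (hinj.mono Set.inter_subset_left)
    apply Set.Finite.subset (C.V.finite_toSet)
    rintro v ⟨t, ⟨htJ, htV⟩, rfl⟩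
    exact htV
  have hinf : (Set.Ioo l r).Infinite := Set.Ioo_infinite hlr
  obtain ⟨t', ht'⟩ := (hinf.diff hbad).nonempty
  have ht'J : t' ∈ Set.Ioo l r := ht'.1
  have ht'01 := hJ01 ht'J
  refine ⟨φ t', hball (hJsub ht'J), ⟨1 - t', t', by linarith [ht'01.2], ht'01.1, by ring, rfl⟩, ?_⟩
  intro hcon
  exact ht'.2 ⟨ht'J, hcon⟩

lemma fullfront_clear (hNR : ∀ u v : ↥C.S, C.G.Adj u v → C.X ↑u ↑v ≠ 0)
    {e : ↥C.S × ↥C.S} (hFF : C.FullFront e) {p : Pt}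
    (hp : p ∈ interior (convexHull ℝ ({C.q, ↑e.1, ↑e.2} : Set Pt))) : p ∉ C.U := by
  intro hpU
  obtain ⟨g, hgEP, a, b, ha, hb, hab, hrep⟩ := C.U_rep hNR hpU
  have hge : g ≠ e := by
    rintro rfl
    obtain ⟨hFp, hs1, hs2, hdepgt⟩ :=
      C.interior_data (C.FS' g.1) (C.FS' g.2) (C.EP_pos hFF.1) hp
    obtain ⟨_, _, _, hzg⟩ :=
      C.param_inv (C.FS' g.1) (C.FS' g.2) (C.EP_pos hgEP) ha hb hab hrep
    have hdepg : C.dep ↑g.1 ↑g.2 (C.sg p) = C.F p := by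
      unfold dep; rw [← hzg]
    linarith
  by_cases hV : C.sg p ∈ C.V
  · obtain ⟨p', hp'int, hp'rep, hp'V⟩ := C.perturb hgEP hp ha hb hab hrep
    exact C.gap_contra hNR hFF hgEP hge hp'int hp'rep hp'V
  · exact C.gap_contra hNR hFF hgEP hge hp ⟨a, b, ha, hb, hab, hrep⟩ hV

lemma visFF (hNR : ∀ u v : ↥C.S, C.G.Adj u v → C.X ↑u ↑v ≠ 0)
    {e : ↥C.S × ↥C.S} (hFF : C.FullFront e) : C.VIC := by
  refine ⟨e.1, e.2, C.EP_adj hFF.1, ?_⟩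
  intro p hp
  have hpU := C.fullfront_clear hNR hFF hp
  constructor
  · intro hpS
    exact hpU (C.vertex_mem_U ⟨p, hpS⟩)
  · intro u v huv hseg
    exact hpU (Set.mem_iUnion.2 ⟨(u, v), Set.mem_iUnion.2 ⟨huv, hseg⟩⟩)

/-! ### the induction along gaps -/

def GoodAt (e : ↥C.S × ↥C.S) (b : ℝ) : Prop :=
  (∃ a, C.consec a b ∧ C.IsFront e a b) ∧
  ∀ a' b', C.consec a' b' → C.sg ↑e.1 ≤ a' → b' ≤ b → C.IsFront e a' b'

lemma consec_below_unique {a a' b : ℝ} (h : C.consec a b) (h' : C.consec a' b) : a = a' := by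
  have k1 : a' ≤ a := (h.2.2.2 a' h'.1).resolve_right (by linarith [h'.2.2.1])
  have k2 : a ≤ a' := (h'.2.2.2 a h.1).resolve_right (by linarith [h.2.2.1])
  linarith

lemma gap_below_exists {b : ℝ} (hb : b ∈ C.V) (hex : ∃ v ∈ C.V, v < b) :
    ∃ a, C.consec a b := by
  obtain ⟨v0, hv0, hv0b⟩ := hex
  have hne : (C.V.filter (· < b)).Nonempty := ⟨v0, Finset.mem_filter.2 ⟨hv0, hv0b⟩⟩
  refine ⟨(C.V.filter (· < b)).max' hne, (Finset.mem_filter.1 (Finset.max'_mem _ hne)).1, hb,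
    (Finset.mem_filter.1 (Finset.max'_mem _ hne)).2, ?_⟩
  intro v hv
  rcases lt_or_ge v b with h | h
  · exact Or.inl (Finset.le_max' (C.V.filter (· < b)) v (Finset.mem_filter.2 ⟨hv, h⟩))
  · exact Or.inr h

lemma step (hNR : ∀ u v : ↥C.S, C.G.Adj u v → C.X ↑u ↑v ≠ 0) :
    ∀ n : ℕ, ∀ b ∈ C.V, (C.V.filter (· < b)).card ≤ n →
    (∃ a, C.consec a b) → C.VIC ∨ ∃ e, C.GoodAt e b := by
  intro n
  induction n with
  | zero =>
    rintro b hb hcard ⟨a, hab⟩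
    exfalso
    have hmem : a ∈ C.V.filter (· < b) := Finset.mem_filter.2 ⟨hab.1, hab.2.2.1⟩
    have := Finset.card_pos.2 ⟨a, hmem⟩
    omega
  | succ n ih =>
    rintro b hb hcard ⟨a, hab⟩
    obtain ⟨f, hf⟩ := C.front_exists hNR hab
    by_cases hga : ∃ a', C.consec a' a
    · have hcard' : (C.V.filter (· < a)).card ≤ n := by
        have hsub : C.V.filter (· < a) ⊆ C.V.filter (· < b) := by
          intro v hv
          rw [Finset.mem_filter] at *
          exact ⟨hv.1, by linarith [hv.2, hab.2.2.1]⟩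
        have hss : C.V.filter (· < a) ⊂ C.V.filter (· < b) := by
          refine (Finset.ssubset_iff_of_subset hsub).2 ⟨a, Finset.mem_filter.2 ⟨hab.1, hab.2.2.1⟩, ?_⟩
          intro hcon
          have := (Finset.mem_filter.1 hcon).2
          linarith
        have := Finset.card_lt_card hss
        omega
      rcases ih a hab.1 hcard' hga with vic | ⟨e, he⟩
      · exact Or.inl vic
      · by_cases hfe : f = e
        · subst hfe
          right
          refine ⟨f, ⟨a, hab, hf⟩, ?_⟩
          intro a' b' hc' h1 h2
          rcases lt_or_eq_of_le h2 with hlt | heq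
          · have hb'a : b' ≤ a := (hab.2.2.2 b' hc'.2.1).resolve_right (by linarith)
            exact he.2 a' b' hc' h1 hb'a
          · subst heq
            have haa := C.consec_below_unique hab hc'
            exact haa ▸ hf
        · obtain ⟨a0, ha0, hea0⟩ := he.1
          have hbd := C.boundary ha0 hab hea0 hf (fun h => hfe h.symm)
          rcases hbd with h1 | h2
          · left
            apply C.visFF hNR (e := e)
            refine ⟨hea0.1, ?_⟩
            intro α β hc hα hβ
            exact he.2 α β hc hα (by rw [h1] at hβ; exact hβ)
          · right
            refine ⟨f, ⟨a, hab, hf⟩, ?_⟩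
            intro a' b' hc' hα hβ
            rcases lt_or_eq_of_le hβ with hlt | heq
            · have hb'a : b' ≤ a := (hab.2.2.2 b' hc'.2.1).resolve_right (by linarith)
              have haa' : a ≤ a' := h2 ▸ hα
              linarith [hc'.2.2.1]
            · subst heq
              have haa := C.consec_below_unique hab hc'
              exact haa ▸ hf
    · right
      refine ⟨f, ⟨a, hab, hf⟩, ?_⟩
      intro a' b' hc' hα hβ
      have hnov : ∀ v ∈ C.V, ¬ (v < a) := by
        intro v hv hlt
        exact hga (C.gap_below_exists hab.1 ⟨v, hv, hlt⟩)
      rcases lt_or_eq_of_le hβ with hlt | heq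
      · have hb'a : b' ≤ a := (hab.2.2.2 b' hc'.2.1).resolve_right (by linarith)
        exact absurd (lt_of_lt_of_le hc'.2.2.1 hb'a) (hnov a' hc'.1)
      · subst heq
        have haa := C.consec_below_unique hab hc'
        exact haa ▸ hf

lemma exists_EP (hNR : ∀ u v : ↥C.S, C.G.Adj u v → C.X ↑u ↑v ≠ 0) : ∃ e, e ∈ C.EP := by
  obtain ⟨s0, hs0⟩ := C.S_nonempty
  obtain ⟨y, hy⟩ := C.adj_of_vertex ⟨s0, hs0⟩
  rcases lt_trichotomy 0 (C.X ↑(⟨s0, hs0⟩ : ↥C.S) ↑y) with hpos | hzero | hneg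
  · exact ⟨(⟨s0, hs0⟩, y), Finset.mem_filter.2 ⟨Finset.mem_univ _, hy, hpos⟩⟩
  · exact absurd hzero.symm (hNR _ _ hy)
  · refine ⟨(y, ⟨s0, hs0⟩), Finset.mem_filter.2 ⟨Finset.mem_univ _, hy.symm, ?_⟩⟩
    rw [C.X_swap]
    linarith

lemma main (hNR : ∀ u v : ↥C.S, C.G.Adj u v → C.X ↑u ↑v ≠ 0) : C.VIC := by
  obtain ⟨e0, he0⟩ := C.exists_EP hNR
  have hlt : C.sg ↑e0.1 < C.sg ↑e0.2 :=
    (C.sg_lt_sg (C.FS' e0.1) (C.FS' e0.2)).2 (C.EP_pos he0)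
  have hVne : C.V.Nonempty := ⟨_, C.sg_mem_V e0.1⟩
  have hmaxmem := Finset.max'_mem _ hVne
  have h2max : C.sg ↑e0.2 ≤ C.V.max' hVne := Finset.le_max' _ _ (C.sg_mem_V e0.2)
  have hex : ∃ v ∈ C.V, v < C.V.max' hVne := ⟨C.sg ↑e0.1, C.sg_mem_V e0.1, by linarith⟩
  obtain ⟨a, hab⟩ := C.gap_below_exists hmaxmem hex
  rcases C.step hNR (C.V.filter (· < C.V.max' hVne)).card (C.V.max' hVne) hmaxmem le_rfl
      ⟨a, hab⟩ with vic | ⟨e, he⟩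
  · exact vic
  · apply C.visFF hNR (e := e)
    obtain ⟨a0, ha0, hea0⟩ := he.1
    refine ⟨hea0.1, ?_⟩
    intro α β hc hα hβ
    exact he.2 α β hc hα (Finset.le_max' _ _ hc.2.1)

end VS

/-- If `G` is a connected plane geometric graph with at least two
vertices and `q` is a point strictly outside the convex hull of the vertices of `G`,
then `q` sees an edge `(a, b)` of `G`: the interior of the triangle `q a b` is disjoint
from all vertices and all edges of `G`. -/
theorem point_outside_hull_sees_edge
    (S : Finset Pt) (hcard : 2 ≤ S.card) (G : SimpleGraph ↥S)
    (hconn : G.Connected) (hplane : PlaneGraph G)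
    (q : Pt) (hq : q ∉ convexHull ℝ (S : Set Pt)) :
    ∃ a b : ↥S, G.Adj a b ∧
      ∀ p ∈ interior (convexHull ℝ ({q, ↑a, ↑b} : Set Pt)),
        p ∉ (S : Set Pt) ∧ ∀ u v : ↥S, G.Adj u v → p ∉ segment ℝ (u : Pt) (v : Pt) := by
  classical
  have hclosed : IsClosed (convexHull ℝ (S : Set Pt)) :=
    (S.finite_toSet.isCompact_convexHull ℝ).isClosed
  obtain ⟨f, u, hfq, hfS⟩ :=
    geometric_hahn_banach_point_closed (convex_convexHull ℝ _) hclosed hq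
  set n0 := f (EuclideanSpace.single 0 1) with hn0
  set n1 := f (EuclideanSpace.single 1 1) with hn1
  have hdecomp : ∀ p : Pt, p = p 0 • EuclideanSpace.single (0 : Fin 2) (1:ℝ)
      + p 1 • EuclideanSpace.single (1 : Fin 2) (1:ℝ) := by
    intro p
    ext i
    fin_cases i <;>
      simp [PiLp.add_apply, PiLp.smul_apply, EuclideanSpace.single_apply, smul_eq_mul]
  have hrep : ∀ p : Pt, f p = p 0 * n0 + p 1 * n1 := by
    intro p
    conv_lhs => rw [hdecomp p]
    rw [map_add, map_smul, map_smul, smul_eq_mul, smul_eq_mul, hn0, hn1]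
  have hsep : ∀ p ∈ convexHull ℝ (S : Set Pt),
      u - f q ≤ (p 0 - q 0) * n0 + (p 1 - q 1) * n1 := by
    intro p hp
    have h1 := hfS p hp
    have h2 : (p 0 - q 0) * n0 + (p 1 - q 1) * n1 = f p - f q := by
      rw [hrep p, hrep q]; ring
    linarith
  set C : VS := ⟨S, G, q, n0, n1, u - f q, by linarith, hplane, hconn, hcard, hsep⟩ with hC
  by_cases hrad : ∃ u' v' : ↥S, G.Adj u' v' ∧ C.X ↑u' ↑v' = 0
  · obtain ⟨u', v', hadj, h0⟩ := hrad
    refine ⟨u', v', hadj, ?_⟩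
    intro p hp
    exact absurd hp (fun hp' => C.radial_empty (C.FS' v') h0 hp')
  · push_neg at hrad
    obtain ⟨a, b, hadj, hvic⟩ := C.main hrad
    exact ⟨a, b, hadj, hvic⟩
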